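/- arXiv:1101.0259 — 2 statements merged into one kernel-verified Lean document; each statement's English description precedes it below -/
import Mathlib

section
/- For y ≥ exp(26000) and σ = 1 − 1/(2 log y), the product over primes p ≤ y of (1 − p^{−σ})^{−1} is less than 7.6515 log y. -/
set_option maxRecDepth 100000

open Finset Nat

namespace Stmt3Aux

/-- primes up to 500 -/
def EXPL : Finset ℕ := {2,3,5,7,11,13,17,19,23,29,31,37,41,43,47,53,59,61,67,71,73,79,83,89,97,101,103,107,109,113,127,131,137,139,149,151,157,163,167,173,179,181,191,193,197,199,211,223,227,229,233,239,241,251,257,263,269,271,277,281,283,293,307,311,313,317,331,337,347,349,353,359,367,373,379,383,389,397,401,409,419,421,431,433,439,443,449,457,461,463,467,479,487,491,499}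

set_option maxHeartbeats 4000000 in
theorem P500_eq : (Finset.range 501).filter Nat.Prime = EXPL := by
  have h : @Finset.filter ℕ Nat.Prime (fun p => Nat.decidablePrime p) (Finset.range 501)
      = EXPL := by decide
  rwa [Finset.filter_congr_decidable] at h

set_option maxHeartbeats 4000000 in
theorem headnum :
    100 * (∏ p ∈ EXPL, (100000*p)) ≤ 1117 * (∏ p ∈ EXPL, (100000*p - 100013)) := by decide


lemma one_sub_inv_le_log {x : ℝ} (hx : 0 < x) : 1 - x⁻¹ ≤ Real.log x := by
  have h := Real.log_le_sub_one_of_pos (inv_pos.mpr hx)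
  rw [Real.log_inv] at h
  linarith

lemma exp_le_inv_one_sub {t : ℝ} (h0 : 0 ≤ t) (h1 : t < 1) : Real.exp t ≤ (1 - t)⁻¹ := by
  have h := Real.add_one_le_exp (-t)
  have h2 : (0:ℝ) < 1 - t := by linarith
  have h3 : 1 - t ≤ (Real.exp t)⁻¹ := by rw [← Real.exp_neg]; linarith
  calc Real.exp t = ((Real.exp t)⁻¹)⁻¹ := by rw [inv_inv]
    _ ≤ (1 - t)⁻¹ := by
        apply inv_anti₀ h2 h3

lemma exp_half_le : Real.exp (1/2 : ℝ) ≤ 1.6487213 := by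
  have h1 : Real.exp (1/2 : ℝ) ^ 2 = Real.exp 1 := by
    rw [← Real.exp_nat_mul]; norm_num
  have h2 : Real.exp 1 < 2.7182818286 := Real.exp_one_lt_d9
  nlinarith [Real.exp_pos (1/2 : ℝ)]

lemma exp_2_le : Real.exp 2 ≤ 7.3890561 := by
  have h1 : Real.exp (2:ℝ) = Real.exp 1 ^ 2 := by
    rw [← Real.exp_nat_mul]; norm_num
  have h2 : Real.exp 1 < 2.7182818286 := Real.exp_one_lt_d9
  nlinarith [Real.exp_pos 1]

lemma exp_one_le : Real.exp 1 ≤ 2.7182819 := le_of_lt (lt_trans Real.exp_one_lt_d9 (by norm_num))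

lemma le_exp_25 : (12.18249 : ℝ) ≤ Real.exp 2.5 := by
  have h1 : Real.exp (2.5:ℝ) ^ 2 = Real.exp 5 := by
    rw [← Real.exp_nat_mul]; norm_num
  have h5 : Real.exp (5:ℝ) = Real.exp 1 ^ 5 := by
    rw [← Real.exp_nat_mul]; norm_num
  have h2 : (2.7182818283:ℝ) < Real.exp 1 := Real.exp_one_gt_d9
  have h3 : (2.7182818283:ℝ)^5 ≤ Real.exp 1 ^ 5 := by
    apply pow_le_pow_left₀ (by norm_num) (le_of_lt h2)
  have h4 : (12.18249:ℝ)^2 ≤ Real.exp 2.5 ^ 2 := by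
    rw [h1, h5]; nlinarith
  nlinarith [Real.exp_pos (2.5:ℝ)]

lemma exp_affine {t : ℝ} (h0 : 0 ≤ t) (h1 : t ≤ 1/2) :
    Real.exp t ≤ 1 + 1.2974426 * t := by
  have hc := convexOn_exp.2 (Set.mem_univ (0:ℝ)) (Set.mem_univ (1/2 : ℝ))
    (show (0:ℝ) ≤ 1 - 2*t by linarith) (show (0:ℝ) ≤ 2*t by linarith)
    (show (1 - 2*t) + 2*t = 1 by ring)
  simp only [smul_eq_mul, mul_zero, zero_add, Real.exp_zero, mul_one] at hc
  have harg : (2*t) * (1/2 : ℝ) = t := by ring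
  rw [harg] at hc
  have h2 : Real.exp (1/2 : ℝ) ≤ 1.6487213 := exp_half_le
  nlinarith

lemma log500_ge : (6.2143246 : ℝ) ≤ Real.log 500 := by
  have h1 : Real.log 500 = 9 * Real.log 2 - Real.log (512/500) := by
    rw [Real.log_div (by norm_num) (by norm_num)]
    have : (512:ℝ) = 2^9 := by norm_num
    rw [this, Real.log_pow]
    push_cast; ring
  have h2 : Real.log (512/500 : ℝ) ≤ 512/500 - 1 := Real.log_le_sub_one_of_pos (by norm_num)
  have h3 : (0.6931471803:ℝ) < Real.log 2 := Real.log_two_gt_d9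
  rw [h1]; nlinarith

lemma log500_le : Real.log 500 ≤ 6.2383247 := by
  have h1 : Real.log 500 ≤ Real.log 512 := Real.log_le_log (by norm_num) (by norm_num)
  have : (512:ℝ) = 2^9 := by norm_num
  rw [this, Real.log_pow] at h1
  have h3 : Real.log 2 < 0.6931471808 := Real.log_two_lt_d9
  push_cast at h1
  nlinarith

lemma loglog500_ge : (1.81096 : ℝ) ≤ Real.log (Real.log 500) := by
  have h0 : (1.81096 : ℝ) ≤ Real.log 6.2143246 := by
    have h1 : Real.log (6.2143246 : ℝ) = 2 + Real.log (6.2143246 / Real.exp 2) := by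
      rw [Real.log_div (by norm_num) (Real.exp_ne_zero 2), Real.log_exp]; ring
    have h2 : 1 - (6.2143246 / Real.exp 2)⁻¹ ≤ Real.log (6.2143246 / Real.exp 2) :=
      one_sub_inv_le_log (by positivity)
    have h3 : (6.2143246 / Real.exp 2)⁻¹ = Real.exp 2 / 6.2143246 := by rw [inv_div]
    have h4 : Real.exp 2 ≤ 7.3890561 := exp_2_le
    rw [h3] at h2
    rw [h1]
    have h5 : Real.exp 2 / 6.2143246 ≤ 7.3890561 / 6.2143246 := by gcongr
    have h6 : (7.3890561 : ℝ) / 6.2143246 ≤ 1.18904 := by norm_num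
    linarith
  calc (1.81096 : ℝ) ≤ Real.log 6.2143246 := h0
    _ ≤ Real.log (Real.log 500) := Real.log_le_log (by norm_num) log500_ge

noncomputable def A (n : ℕ) : ℝ :=
  ∑ p ∈ (Finset.range (n+1)).filter Nat.Prime, Real.log p / p

/-- `log n!` as a sum over primes up to `n`. -/
lemma log_factorial (n : ℕ) :
    Real.log (n ! : ℕ) =
      ∑ p ∈ (Finset.range (n+1)).filter Nat.Prime,
        (padicValNat p (n !) : ℝ) * Real.log p := by
  have h0 : (n ! : ℕ) ≠ 0 := (Nat.factorial_pos n).ne'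
  have key : (n ! : ℕ) = ∏ p ∈ (Finset.range (n+1)).filter Nat.Prime,
      p ^ padicValNat p (n !) := by
    conv_lhs => rw [← Nat.prod_pow_prime_padicValNat (n !) h0 (n ! + 1) (Nat.lt_succ_self _)]
    symm
    apply Finset.prod_subset
    · intro p hp
      simp only [Finset.mem_filter, Finset.mem_range] at *
      exact ⟨Nat.lt_succ_of_le (le_trans (Nat.le_of_lt_succ hp.1) (Nat.self_le_factorial n)),
        hp.2⟩
    · intro p hp hnp
      simp only [Finset.mem_filter, Finset.mem_range] at hp hnp
      have hple : ¬ p ≤ n := fun hle => hnp ⟨Nat.lt_succ_of_le hle, hp.2⟩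
      have hnd : ¬ p ∣ n ! := fun hd => hple ((Nat.Prime.dvd_factorial hp.2).mp hd)
      rw [padicValNat.eq_zero_of_not_dvd hnd, pow_zero]
  have key2 : ((n ! : ℕ) : ℝ) = ∏ p ∈ (Finset.range (n+1)).filter Nat.Prime,
      ((p : ℝ)) ^ padicValNat p (n !) := by
    conv_lhs => rw [key]
    push_cast
    rfl
  rw [key2, Real.log_prod]
  · exact Finset.sum_congr rfl fun p hp => Real.log_pow _ _
  · intro p hp
    simp only [Finset.mem_filter] at hp
    have : (0:ℝ) < p := by exact_mod_cast hp.2.pos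
    positivity

/-- Lower bound: `n/p ≤ ν_p(n!)` for primes `p ≤ n`. -/
lemma le_padicValNat_factorial {n p : ℕ} (hp : p.Prime) (hn : 1 ≤ n) :
    n / p ≤ padicValNat p (n !) := by
  haveI : Fact p.Prime := ⟨hp⟩
  rw [padicValNat_factorial (b := n + 1) (Nat.lt_succ_of_le (Nat.log_le_self _ _))]
  have h1 : 1 ∈ Finset.Ico 1 (n+1) := by
    simp only [Finset.mem_Ico]; omega
  calc n / p = n / p ^ 1 := by rw [pow_one]
    _ ≤ ∑ i ∈ Finset.Ico 1 (n+1), n / p ^ i :=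
        Finset.single_le_sum (f := fun i => n / p ^ i) (fun i _ => Nat.zero_le _) h1

/-- Upper bound: `ν_p(n!) ≤ n/(p-1)` in `ℝ`. -/
lemma padicValNat_factorial_le {n p : ℕ} (hp : p.Prime) (hn : 1 ≤ n) :
    (padicValNat p (n !) : ℝ) ≤ (n : ℝ) / ((p : ℝ) - 1) := by
  haveI : Fact p.Prime := ⟨hp⟩
  have hp2 : (2:ℝ) ≤ (p:ℝ) := by exact_mod_cast hp.two_le
  have hp0 : (0:ℝ) < p := by linarith
  have hp1 : (0:ℝ) < (p:ℝ) - 1 := by linarith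
  rw [padicValNat_factorial (b := n + 1) (Nat.lt_succ_of_le (Nat.log_le_self _ _))]
  push_cast
  have hstep : ∀ i ∈ Finset.Ico 1 (n+1), ((n / p ^ i : ℕ) : ℝ) ≤ (n : ℝ) * ((p:ℝ)⁻¹) ^ i := by
    intro i _
    calc ((n / p ^ i : ℕ) : ℝ) ≤ (n : ℝ) / ((p:ℝ) ^ i) := by
          have := Nat.cast_div_le (α := ℝ) (m := n) (n := p ^ i)
          push_cast at this
          exact this
      _ = (n : ℝ) * ((p:ℝ)⁻¹) ^ i := by
          rw [div_eq_mul_inv, inv_pow]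
  calc (∑ i ∈ Finset.Ico 1 (n+1), ((n / p ^ i : ℕ) : ℝ))
      ≤ ∑ i ∈ Finset.Ico 1 (n+1), (n : ℝ) * ((p:ℝ)⁻¹) ^ i :=
        Finset.sum_le_sum hstep
    _ = (n : ℝ) * ∑ i ∈ Finset.Ico 1 (n+1), ((p:ℝ)⁻¹) ^ i := by
        rw [Finset.mul_sum]
    _ ≤ (n : ℝ) / ((p : ℝ) - 1) := by
        have hr0 : (0:ℝ) < (p:ℝ)⁻¹ := inv_pos.mpr hp0
        have hr1 : (p:ℝ)⁻¹ < 1 := by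
          rw [inv_lt_one_iff₀]; right; linarith
        have hne : (p:ℝ)⁻¹ ≠ 1 := ne_of_lt hr1
        have h1r : (0:ℝ) < 1 - (p:ℝ)⁻¹ := by linarith
        have hsplit : ∑ i ∈ Finset.range (n+1), ((p:ℝ)⁻¹)^i
            = 1 + ∑ i ∈ Finset.Ico 1 (n+1), ((p:ℝ)⁻¹)^i := by
          rw [Finset.range_eq_Ico, Finset.sum_eq_sum_Ico_succ_bot (by omega)]
          simp
        have hsum : ∑ i ∈ Finset.range (n+1), ((p:ℝ)⁻¹) ^ i ≤ (1 - (p:ℝ)⁻¹)⁻¹ := by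
          rw [geom_sum_eq hne, div_le_iff_of_neg (by linarith : (p:ℝ)⁻¹ - 1 < 0)]
          have hm1 : (1 - (p:ℝ)⁻¹)⁻¹ * ((p:ℝ)⁻¹ - 1) = -1 := by
            field_simp
            ring
          rw [hm1]
          nlinarith [pow_nonneg hr0.le (n+1)]
        have hid : ((1 - (p:ℝ)⁻¹)⁻¹ - 1) = 1 / ((p:ℝ) - 1) := by
          field_simp
          ring
        have hle : ∑ i ∈ Finset.Ico 1 (n+1), ((p:ℝ)⁻¹)^i ≤ 1 / ((p:ℝ) - 1) := by
          rw [← hid]; linarith [hsplit ▸ hsum]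
        calc (n : ℝ) * (∑ i ∈ Finset.Ico 1 (n+1), ((p:ℝ)⁻¹)^i)
            ≤ (n : ℝ) * (1 / ((p:ℝ) - 1)) := by
              apply mul_le_mul_of_nonneg_left hle (by positivity)
          _ = (n : ℝ) / ((p : ℝ) - 1) := by ring

/-- Stirling-type lower bound. -/
lemma stirling (n : ℕ) (hn : 1 ≤ n) :
    (n : ℝ) * Real.log n - n ≤ Real.log (n ! : ℕ) := by
  induction n with
  | zero => omega
  | succ m ih =>
    rcases Nat.eq_or_lt_of_le hn with h1 | h2
    · simp [← h1]
    · have hm : 1 ≤ m := by omega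
      have ihm := ih hm
      have hm0 : (0:ℝ) < m := by exact_mod_cast hm
      have hfact : ((m+1)! : ℕ) = (m+1) * m ! := rfl
      have hlog : Real.log ((m+1)! : ℕ) = Real.log (m+1 : ℝ) + Real.log (m ! : ℕ) := by
        rw [hfact]
        push_cast
        rw [Real.log_mul (by positivity) (by exact_mod_cast (Nat.factorial_pos m).ne')]
      have hkey : (m:ℝ) * (Real.log (m+1) - Real.log m) ≤ 1 := by
        have h3 : Real.log ((m+1 : ℝ)/m) ≤ (m+1 : ℝ)/m - 1 :=
          Real.log_le_sub_one_of_pos (by positivity)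
        rw [Real.log_div (by positivity) (by positivity)] at h3
        have h4 : (m+1 : ℝ)/m - 1 = 1/m := by field_simp; ring
        rw [h4] at h3
        calc (m:ℝ) * (Real.log (m+1) - Real.log m) ≤ (m:ℝ) * (1/m) :=
              mul_le_mul_of_nonneg_left h3 (by positivity)
          _ = 1 := by field_simp
      rw [hlog]
      push_cast
      nlinarith [hkey, ihm]

/-- telescoping series bound : `∑_{m=2}^n log m/(m(m-1)) ≤ 2 log 2`. -/
lemma series (n : ℕ) (hn : 1 ≤ n) :
    ∑ m ∈ Finset.Icc 2 n, Real.log m / ((m : ℝ) * ((m:ℝ) - 1))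
      ≤ 2 * Real.log 2 - (Real.log n + 2 * Real.log 2) / n := by
  induction n, hn using Nat.le_induction with
  | base => simp
  | succ n hn ih =>
    rw [Finset.sum_Icc_succ_top (by omega : 2 ≤ n + 1)]
    have hn0 : (0:ℝ) < n := by exact_mod_cast hn
    have hn1 : (0:ℝ) < (n:ℝ) + 1 := by linarith
    have key : ((n:ℝ)+1) * (Real.log ((n:ℝ)+1) - Real.log n) ≤ 2 * Real.log 2 := by
      rcases Nat.lt_or_ge n 3 with h3 | h3
      · interval_cases n
        · norm_num
        · -- n = 2 : 3 * log(3/2) ≤ 2 log 2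
          have e1 : ((2:ℕ):ℝ) = (2:ℝ) := by norm_num
          have h27 : Real.log (((2:ℕ):ℝ)+1) - Real.log ((2:ℕ):ℝ) = Real.log ((3:ℝ)/2) := by
            rw [Real.log_div (by norm_num) (by norm_num)]
            norm_num
          rw [h27]
          have h28 : (3:ℝ) * Real.log ((3:ℝ)/2) = Real.log (((3:ℝ)/2)^3) := by
            rw [Real.log_pow]; push_cast; ring
          have h29 : (2:ℝ) * Real.log 2 = Real.log 4 := by
            have : (4:ℝ) = 2^2 := by norm_num
            rw [this, Real.log_pow]; push_cast; ring
          push_cast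
          rw [show ((2:ℝ)+1) = 3 by norm_num, h28, h29]
          apply Real.log_le_log (by positivity)
          norm_num
      · have hl : Real.log ((n:ℝ)+1) - Real.log n ≤ 1/n := by
          have h5 : Real.log (((n:ℝ)+1)/n) ≤ ((n:ℝ)+1)/n - 1 :=
            Real.log_le_sub_one_of_pos (by positivity)
          rw [Real.log_div (by positivity) (by positivity)] at h5
          have h6 : ((n:ℝ)+1)/n - 1 = 1/n := by field_simp; ring
          linarith
        have h7 : ((n:ℝ)+1) * (Real.log ((n:ℝ)+1) - Real.log n) ≤ ((n:ℝ)+1) * (1/n) := by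
          apply mul_le_mul_of_nonneg_left hl (by positivity)
        have h8 : ((n:ℝ)+1) * (1/n) ≤ 4/3 := by
          rw [mul_one_div, div_le_div_iff₀ hn0 (by norm_num)]
          have : (3:ℝ) ≤ n := by exact_mod_cast h3
          linarith
        have h9 : (4:ℝ)/3 ≤ 2 * Real.log 2 := by
          nlinarith [Real.log_two_gt_d9]
        linarith
    have hterm : Real.log ((n:ℝ)+1) / (((n:ℝ)+1) * (((n:ℝ)+1) - 1))
        ≤ (Real.log n + 2*Real.log 2)/n - (Real.log ((n:ℝ)+1) + 2*Real.log 2)/((n:ℝ)+1) := by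
      have expand : (Real.log n + 2*Real.log 2)/n - (Real.log ((n:ℝ)+1) + 2*Real.log 2)/((n:ℝ)+1)
          - Real.log ((n:ℝ)+1) / (((n:ℝ)+1) * (((n:ℝ)+1) - 1))
          = (2*Real.log 2 - (((n:ℝ)+1) * (Real.log ((n:ℝ)+1) - Real.log n)))/(((n:ℝ)+1)*(n:ℝ)) := by
        rw [add_sub_cancel_right]
        field_simp
        ring
      have hpos : 0 ≤ (2*Real.log 2 - (((n:ℝ)+1) * (Real.log ((n:ℝ)+1) - Real.log n)))/(((n:ℝ)+1)*(n:ℝ)) := by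
        apply div_nonneg (by linarith) (by positivity)
      linarith [expand ▸ hpos]
    push_cast
    push_cast at ih hterm
    linarith


lemma theta_le (n : ℕ) :
    ∑ p ∈ (Finset.range (n+1)).filter Nat.Prime, Real.log p ≤ (n : ℝ) * (2 * Real.log 2) := by
  have h1 : ∑ p ∈ (Finset.range (n+1)).filter Nat.Prime, Real.log p
      = Real.log ((primorial n : ℕ) : ℝ) := by
    rw [primorial]
    push_cast
    rw [Real.log_prod]
    intro p hp
    simp only [Finset.mem_filter] at hp
    exact_mod_cast hp.2.pos.ne'
  rw [h1]
  have h2 : ((primorial n : ℕ) : ℝ) ≤ ((4 ^ n : ℕ) : ℝ) := by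
    exact_mod_cast primorial_le_4_pow n
  have h3 : Real.log ((primorial n : ℕ) : ℝ) ≤ Real.log ((4:ℝ) ^ n) := by
    apply Real.log_le_log
    · exact_mod_cast (primorial_pos n)
    · push_cast at h2 ⊢; exact h2
  calc Real.log ((primorial n : ℕ) : ℝ) ≤ Real.log ((4:ℝ) ^ n) := h3
    _ = (n : ℝ) * (2 * Real.log 2) := by
        rw [Real.log_pow]
        have : (4:ℝ) = 2^2 := by norm_num
        rw [this, Real.log_pow]
        push_cast; ring

lemma mertens_upper (n : ℕ) (hn : 2 ≤ n) : A n ≤ Real.log n + 2 * Real.log 2 := by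
  have hn0 : (0:ℝ) < n := by exact_mod_cast Nat.lt_of_lt_of_le (by norm_num) hn
  have hn1 : 1 ≤ n := by omega
  set F := (Finset.range (n+1)).filter Nat.Prime with hF
  -- pointwise : (n:ℝ)/p * log p ≤ (⌊n/p⌋ + 1) * log p
  have hpw : ∀ p ∈ F, (n:ℝ)/p * Real.log p ≤ ((n / p : ℕ) : ℝ) * Real.log p + Real.log p := by
    intro p hp
    simp only [hF, Finset.mem_filter] at hp
    have hp0 : (0:ℝ) < p := by exact_mod_cast hp.2.pos
    have hlogp : 0 ≤ Real.log p := Real.log_natCast_nonneg p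
    have hdiv : (n:ℝ)/p ≤ ((n / p : ℕ) : ℝ) + 1 := by
      have h1 : n < p * (n / p + 1) := by
        have h2 := Nat.div_add_mod n p
        have h3 := Nat.mod_lt n hp.2.pos
        have h4 : p * (n / p + 1) = p * (n / p) + p := by ring
        omega
      have h4 : (n:ℝ) < (p:ℝ) * (((n / p : ℕ) : ℝ) + 1) := by exact_mod_cast h1
      rw [div_le_iff₀ hp0]
      nlinarith
    nlinarith
  -- ∑ ⌊n/p⌋ log p ≤ log n!
  have hleg : ∑ p ∈ F, ((n / p : ℕ) : ℝ) * Real.log p ≤ Real.log (Nat.factorial n : ℕ) := by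
    rw [log_factorial n]
    apply Finset.sum_le_sum
    intro p hp
    simp only [hF, Finset.mem_filter] at hp
    have hlogp : 0 ≤ Real.log p := Real.log_natCast_nonneg p
    have := le_padicValNat_factorial hp.2 hn1
    have hcast : ((n / p : ℕ) : ℝ) ≤ (padicValNat p (Nat.factorial n) : ℝ) := by exact_mod_cast this
    nlinarith
  have hfact : Real.log (Nat.factorial n : ℕ) ≤ (n:ℝ) * Real.log n := by
    have h1 : (Nat.factorial n : ℝ) ≤ ((n:ℝ)) ^ n := by
      exact_mod_cast Nat.factorial_le_pow n
    calc Real.log (Nat.factorial n : ℕ)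
        ≤ Real.log ((n:ℝ) ^ n) := by
          apply Real.log_le_log (by exact_mod_cast Nat.factorial_pos n) h1
      _ = (n:ℝ) * Real.log n := by rw [Real.log_pow]
  have hth := theta_le n
  -- combine
  have hAn : (n:ℝ) * A n = ∑ p ∈ F, (n:ℝ)/p * Real.log p := by
    rw [A, Finset.mul_sum]
    apply Finset.sum_congr rfl
    intro p hp
    ring
  have hchain : (n:ℝ) * A n ≤ (n:ℝ) * Real.log n + (n:ℝ) * (2 * Real.log 2) := by
    rw [hAn]
    calc ∑ p ∈ F, (n:ℝ)/p * Real.log p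
        ≤ ∑ p ∈ F, (((n / p : ℕ) : ℝ) * Real.log p + Real.log p) := Finset.sum_le_sum hpw
      _ = (∑ p ∈ F, ((n / p : ℕ) : ℝ) * Real.log p) + ∑ p ∈ F, Real.log p := by
          rw [Finset.sum_add_distrib]
      _ ≤ (n:ℝ) * Real.log n + (n:ℝ) * (2 * Real.log 2) := by
          have := hleg.trans hfact
          linarith [hth]
  nlinarith [hchain]

lemma mertens_lower (n : ℕ) (hn : 2 ≤ n) :
    Real.log n - 1 - 2 * Real.log 2 ≤ A n := by
  have hn0 : (0:ℝ) < n := by exact_mod_cast Nat.lt_of_lt_of_le (by norm_num) hn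
  have hn1 : 1 ≤ n := by omega
  set F := (Finset.range (n+1)).filter Nat.Prime with hF
  have hst := stirling n hn1
  have hup : Real.log (Nat.factorial n : ℕ)
      ≤ (n:ℝ) * A n + (n:ℝ) * (∑ p ∈ F, Real.log p / ((p:ℝ) * ((p:ℝ) - 1))) := by
    rw [log_factorial n]
    have hpw : ∀ p ∈ F, (padicValNat p (Nat.factorial n) : ℝ) * Real.log p
        ≤ (n:ℝ) * (Real.log p / p) + (n:ℝ) * (Real.log p / ((p:ℝ) * ((p:ℝ) - 1))) := by
      intro p hp
      simp only [hF, Finset.mem_filter] at hp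
      have hp2 : (2:ℝ) ≤ (p:ℝ) := by exact_mod_cast hp.2.two_le
      have hp0 : (0:ℝ) < p := by linarith
      have hp1 : (0:ℝ) < (p:ℝ) - 1 := by linarith
      have hlogp : 0 ≤ Real.log p := Real.log_natCast_nonneg p
      have hub := padicValNat_factorial_le hp.2 hn1
      have hsplit : (n:ℝ) / ((p:ℝ) - 1) * Real.log p
          = (n:ℝ) * (Real.log p / p) + (n:ℝ) * (Real.log p / ((p:ℝ) * ((p:ℝ) - 1))) := by
        field_simp
        ring
      rw [← hsplit]
      apply mul_le_mul_of_nonneg_right hub hlogp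
    calc ∑ p ∈ F, (padicValNat p (Nat.factorial n) : ℝ) * Real.log p
        ≤ ∑ p ∈ F, ((n:ℝ) * (Real.log p / p) + (n:ℝ) * (Real.log p / ((p:ℝ) * ((p:ℝ) - 1)))) :=
          Finset.sum_le_sum hpw
      _ = (n:ℝ) * A n + (n:ℝ) * (∑ p ∈ F, Real.log p / ((p:ℝ) * ((p:ℝ) - 1))) := by
          rw [Finset.sum_add_distrib, ← Finset.mul_sum, ← Finset.mul_sum, A]
  have hser : ∑ p ∈ F, Real.log p / ((p:ℝ) * ((p:ℝ) - 1)) ≤ 2 * Real.log 2 := by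
    have hsub : F ⊆ Finset.Icc 2 n := by
      intro p hp
      simp only [hF, Finset.mem_filter, Finset.mem_range] at hp
      simp only [Finset.mem_Icc]
      exact ⟨hp.2.two_le, by omega⟩
    have h1 : ∑ p ∈ F, Real.log p / ((p:ℝ) * ((p:ℝ) - 1))
        ≤ ∑ m ∈ Finset.Icc 2 n, Real.log m / ((m:ℝ) * ((m:ℝ) - 1)) := by
      apply Finset.sum_le_sum_of_subset_of_nonneg hsub
      intro m hm _
      simp only [Finset.mem_Icc] at hm
      have hm2 : (2:ℝ) ≤ (m:ℝ) := by exact_mod_cast hm.1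
      have : 0 ≤ Real.log m := Real.log_natCast_nonneg m
      apply div_nonneg this (by nlinarith)
    have h2 := series n hn1
    have h3 : 0 ≤ (Real.log n + 2 * Real.log 2) / n := by
      have : 0 ≤ Real.log n := Real.log_natCast_nonneg n
      positivity
    linarith
  have : (n:ℝ) * (Real.log n - 1 - 2 * Real.log 2) ≤ (n:ℝ) * A n := by
    nlinarith [hst, hup, hser]
  nlinarith [this]



lemma loglog_step (n : ℕ) (hn : 2 ≤ n) :
    Real.log n * ((Real.log n)⁻¹ - (Real.log ((n:ℝ)+1))⁻¹)
      ≤ Real.log (Real.log ((n:ℝ)+1)) - Real.log (Real.log n) := by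
  have h2 : (2:ℝ) ≤ (n:ℝ) := by exact_mod_cast hn
  have hln : 0 < Real.log n := Real.log_pos (by linarith)
  have hln1 : 0 < Real.log ((n:ℝ)+1) := Real.log_pos (by linarith)
  have hmono : Real.log n ≤ Real.log ((n:ℝ)+1) := Real.log_le_log (by linarith) (by linarith)
  have hx : (0:ℝ) < Real.log ((n:ℝ)+1) / Real.log n := by positivity
  have h3 : 1 - (Real.log ((n:ℝ)+1) / Real.log n)⁻¹ ≤ Real.log (Real.log ((n:ℝ)+1) / Real.log n) :=
    one_sub_inv_le_log hx
  have h4 : Real.log (Real.log ((n:ℝ)+1) / Real.log n)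
      = Real.log (Real.log ((n:ℝ)+1)) - Real.log (Real.log n) :=
    Real.log_div hln1.ne' hln.ne'
  have h5 : (Real.log ((n:ℝ)+1) / Real.log n)⁻¹ = Real.log n / Real.log ((n:ℝ)+1) := by
    rw [inv_div]
  rw [h4, h5] at h3
  have h6 : Real.log n * ((Real.log n)⁻¹ - (Real.log ((n:ℝ)+1))⁻¹)
      = 1 - Real.log n / Real.log ((n:ℝ)+1) := by
    field_simp
  rw [h6]
  linarith

/-- Abel summation bound for `∑ 1/p` over `500 < p ≤ N`. -/
lemma abel (N : ℕ) (hN : 500 ≤ N) :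
    ∑ p ∈ (Finset.Ioc 500 N).filter Nat.Prime, ((p:ℝ))⁻¹
      ≤ (A N - 2*Real.log 2) * (Real.log N)⁻¹ + Real.log (Real.log N)
        - (A 500 - 2*Real.log 2) * (Real.log 500)⁻¹ - Real.log (Real.log 500) := by
  induction N, hN using Nat.le_induction with
  | base => simp
  | succ n hn ih =>
    have h2 : (2:ℝ) ≤ (n:ℝ) := by exact_mod_cast (by omega : 2 ≤ n)
    have hln : 0 < Real.log n := Real.log_pos (by linarith)
    have hcast : ((n:ℝ)+1) = ((n+1 : ℕ) : ℝ) := by push_cast; ring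
    have hln1 : 0 < Real.log ((n+1 : ℕ) : ℝ) := by
      rw [← hcast]; exact Real.log_pos (by linarith)
    -- sums as ite-sums
    have hsum : ∀ m : ℕ, 500 ≤ m → ∑ p ∈ (Finset.Ioc 500 m).filter Nat.Prime, ((p:ℝ))⁻¹
        = ∑ k ∈ Finset.Ioc 500 m, (if Nat.Prime k then ((k:ℝ))⁻¹ else 0) := by
      intro m _
      rw [Finset.sum_filter]
    have hS : ∑ p ∈ (Finset.Ioc 500 (n+1)).filter Nat.Prime, ((p:ℝ))⁻¹
        = (∑ p ∈ (Finset.Ioc 500 n).filter Nat.Prime, ((p:ℝ))⁻¹)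
          + (if Nat.Prime (n+1) then (((n+1:ℕ):ℝ))⁻¹ else 0) := by
      rw [hsum (n+1) (by omega), hsum n hn, Finset.sum_Ioc_succ_top (by omega : 500 ≤ n)]
    have hA : A (n+1) = A n + (if Nat.Prime (n+1) then Real.log ((n+1:ℕ):ℝ) / ((n+1:ℕ):ℝ) else 0) := by
      rw [A, A, Finset.sum_filter, Finset.sum_filter, Finset.sum_range_succ]
    -- key step inequality
    have hup := mertens_upper n (by omega)
    have hmono : Real.log (n:ℝ) ≤ Real.log ((n+1:ℕ):ℝ) := by
      rw [← hcast]; exact Real.log_le_log (by linarith) (by linarith)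
    have hwmono : (Real.log ((n+1:ℕ):ℝ))⁻¹ ≤ (Real.log (n:ℝ))⁻¹ := by
      apply inv_anti₀ hln hmono
    have hstep : (A n - 2*Real.log 2) * ((Real.log (n:ℝ))⁻¹ - (Real.log ((n+1:ℕ):ℝ))⁻¹)
        ≤ Real.log (Real.log ((n+1:ℕ):ℝ)) - Real.log (Real.log (n:ℝ)) := by
      have h7 : (A n - 2*Real.log 2) * ((Real.log (n:ℝ))⁻¹ - (Real.log ((n+1:ℕ):ℝ))⁻¹)
          ≤ Real.log n * ((Real.log (n:ℝ))⁻¹ - (Real.log ((n+1:ℕ):ℝ))⁻¹) := by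
        apply mul_le_mul_of_nonneg_right (by linarith) (by linarith)
      have h8 := loglog_step n (by omega)
      rw [hcast] at h8
      linarith
    -- prime-term identity
    have hterm : (if Nat.Prime (n+1) then (((n+1:ℕ):ℝ))⁻¹ else 0)
        = (if Nat.Prime (n+1) then Real.log ((n+1:ℕ):ℝ) / ((n+1:ℕ):ℝ) else 0)
          * (Real.log ((n+1:ℕ):ℝ))⁻¹ := by
      by_cases hp : Nat.Prime (n+1)
      · simp only [hp, if_true]
        rw [mul_comm, ← mul_div_assoc, inv_mul_cancel₀ hln1.ne', one_div]
      · simp [hp]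
    rw [hS, hA, hterm]
    have hAn1 : A n + (if Nat.Prime (n+1) then Real.log ((n+1:ℕ):ℝ) / ((n+1:ℕ):ℝ) else 0)
        - 2*Real.log 2
        = (A n - 2*Real.log 2)
          + (if Nat.Prime (n+1) then Real.log ((n+1:ℕ):ℝ) / ((n+1:ℕ):ℝ) else 0) := by ring
    -- final linear combination
    have expand : ((A n - 2*Real.log 2)
          + (if Nat.Prime (n+1) then Real.log ((n+1:ℕ):ℝ) / ((n+1:ℕ):ℝ) else 0))
          * (Real.log ((n+1:ℕ):ℝ))⁻¹
        = (A n - 2*Real.log 2) * (Real.log ((n+1:ℕ):ℝ))⁻¹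
          + (if Nat.Prime (n+1) then Real.log ((n+1:ℕ):ℝ) / ((n+1:ℕ):ℝ) else 0)
            * (Real.log ((n+1:ℕ):ℝ))⁻¹ := by ring
    rw [hAn1, expand]
    linarith [hstep, ih]

lemma sqsum (N : ℕ) (hN : 500 ≤ N) :
    ∑ m ∈ Finset.Ioc 500 N, (((m:ℝ))^2)⁻¹ ≤ (500:ℝ)⁻¹ - ((N:ℝ))⁻¹ := by
  induction N, hN using Nat.le_induction with
  | base => simp
  | succ n hn ih =>
    rw [Finset.sum_Ioc_succ_top (by omega : 500 ≤ n)]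
    have h5 : (500:ℝ) ≤ (n:ℝ) := by exact_mod_cast hn
    have hn0 : (0:ℝ) < n := by linarith
    have hn1 : (0:ℝ) < (n:ℝ)+1 := by linarith
    have key : ((((n+1:ℕ):ℝ))^2)⁻¹ ≤ ((n:ℝ))⁻¹ - (((n+1:ℕ):ℝ))⁻¹ := by
      push_cast
      rw [show ((n:ℝ))⁻¹ - ((n:ℝ)+1)⁻¹ = (((n:ℝ))*((n:ℝ)+1))⁻¹ by
        field_simp; ring]
      apply inv_anti₀ (by positivity)
      nlinarith
    push_cast
    push_cast at ih key
    linarith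


set_option maxHeartbeats 1600000 in
lemma headprod_le : ∏ p ∈ EXPL, ((p:ℝ)/((p:ℝ) - 1.00013)) ≤ 11.17 := by
  have hp2 : ∀ p ∈ EXPL, 2 ≤ p := by decide
  have hfac : ∀ p ∈ EXPL, (p:ℝ)/((p:ℝ) - 1.00013)
      = ((100000*p : ℕ) : ℝ) / (((100000*p - 100013 : ℕ)) : ℝ) := by
    intro p hp
    have h2 := hp2 p hp
    have hle : 100013 ≤ 100000*p := by omega
    have hnum : ((100000*p : ℕ) : ℝ) = 100000*(p:ℝ) := by push_cast; ring
    have hden : (((100000*p - 100013 : ℕ)) : ℝ) = 100000*(p:ℝ) - 100013 := by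
      rw [Nat.cast_sub hle]; push_cast; ring
    rw [hnum, hden]
    have hp0 : (2:ℝ) ≤ (p:ℝ) := by exact_mod_cast h2
    rw [div_eq_div_iff (by linarith) (by nlinarith)]
    ring
  rw [Finset.prod_congr rfl hfac, Finset.prod_div_distrib]
  have hnum : ∏ p ∈ EXPL, ((100000*p : ℕ) : ℝ) = ((∏ p ∈ EXPL, (100000*p) : ℕ) : ℝ) := by
    push_cast; rfl
  have hden : ∏ p ∈ EXPL, (((100000*p - 100013 : ℕ)) : ℝ)
      = ((∏ p ∈ EXPL, (100000*p - 100013) : ℕ) : ℝ) := by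
    push_cast; rfl
  rw [hnum, hden]
  have hdpos : 0 < (∏ p ∈ EXPL, (100000*p - 100013) : ℕ) := by
    apply Finset.prod_pos
    intro p hp
    have := hp2 p hp
    omega
  have hdposR : (0:ℝ) < ((∏ p ∈ EXPL, (100000*p - 100013) : ℕ) : ℝ) := by
    exact_mod_cast hdpos
  rw [div_le_iff₀ hdposR]
  have hnat := headnum
  have hcast : (100:ℝ) * ((∏ p ∈ EXPL, (100000*p) : ℕ) : ℝ)
      ≤ 1117 * ((∏ p ∈ EXPL, (100000*p - 100013) : ℕ) : ℝ) := by
    exact_mod_cast hnat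
  nlinarith

lemma headlog_le : Real.log 11.17 ≤ 2.41689 := by
  have h1 : Real.log (11.17:ℝ) = 2.5 + Real.log (11.17 / Real.exp 2.5) := by
    rw [Real.log_div (by norm_num) (Real.exp_ne_zero _), Real.log_exp]; ring
  have h2 : Real.log ((11.17:ℝ) / Real.exp 2.5) ≤ 11.17 / Real.exp 2.5 - 1 :=
    Real.log_le_sub_one_of_pos (by positivity)
  have h3 : (11.17:ℝ) / Real.exp 2.5 ≤ 11.17 / 12.18249 := by
    apply div_le_div_of_nonneg_left (by norm_num) (by norm_num) le_exp_25
  have h4 : (11.17:ℝ) / 12.18249 ≤ 0.91689 := by norm_num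
  rw [h1]
  linarith

lemma log76515_ge : (2.0338:ℝ) ≤ Real.log 7.6515 := by
  have h1 : Real.log (7.6515:ℝ) = 3 * Real.log 2 - Real.log (8/7.6515) := by
    rw [Real.log_div (by norm_num) (by norm_num)]
    have : (8:ℝ) = 2^3 := by norm_num
    rw [this, Real.log_pow]
    push_cast; ring
  have h2 : Real.log ((8:ℝ)/7.6515) ≤ 8/7.6515 - 1 := Real.log_le_sub_one_of_pos (by norm_num)
  have h3 : (8:ℝ)/7.6515 - 1 ≤ 0.0455467 := by norm_num
  have h4 : (0.6931471803:ℝ) < Real.log 2 := Real.log_two_gt_d9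
  rw [h1]
  nlinarith

/-- decomposition of `p^(-σ)` as `exp t / p`. -/
lemma rpow_decomp {y σ : ℝ} (hL : (26000:ℝ) ≤ Real.log y)
    (hσ : σ = 1 - 1 / (2 * Real.log y)) {p : ℕ} (hp : Nat.Prime p) :
    (p:ℝ) ^ (-σ) = Real.exp (Real.log p / (2 * Real.log y)) / p := by
  have hp0 : (0:ℝ) < p := by exact_mod_cast hp.pos
  have hL0 : (0:ℝ) < Real.log y := by linarith
  rw [Real.rpow_def_of_pos hp0]
  have harg : Real.log p * (-σ) = Real.log p / (2 * Real.log y) - Real.log p := by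
    rw [hσ]; field_simp; ring
  rw [harg, Real.exp_sub, Real.exp_log hp0]

lemma head_point {y σ : ℝ} (hL : (26000:ℝ) ≤ Real.log y)
    (hσ : σ = 1 - 1 / (2 * Real.log y)) {p : ℕ} (hp : Nat.Prime p) (hp500 : p ≤ 500) :
    Real.log ((1 - (p:ℝ) ^ (-σ))⁻¹) ≤ Real.log ((p:ℝ)/((p:ℝ) - 1.00013)) := by
  have hp2 : (2:ℝ) ≤ (p:ℝ) := by exact_mod_cast hp.two_le
  have hp0 : (0:ℝ) < p := by linarith
  have hL0 : (0:ℝ) < Real.log y := by linarith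
  set t := Real.log p / (2 * Real.log y) with ht
  have hx : (p:ℝ) ^ (-σ) = Real.exp t / p := rpow_decomp hL hσ hp
  have hlogp0 : 0 ≤ Real.log p := Real.log_natCast_nonneg p
  have hlogp : Real.log p ≤ 6.2383247 := by
    calc Real.log p ≤ Real.log 500 := by
          apply Real.log_le_log hp0
          exact_mod_cast hp500
      _ ≤ 6.2383247 := log500_le
  have ht0 : 0 ≤ t := by positivity
  have ht1 : t ≤ 0.00012 := by
    rw [ht]
    have h52 : (52000:ℝ) ≤ 2 * Real.log y := by linarith
    calc Real.log p / (2 * Real.log y) ≤ 6.2383247 / (2 * Real.log y) := by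
          apply (div_le_div_iff_of_pos_right (by linarith)).mpr hlogp
      _ ≤ 6.2383247 / 52000 := by
          apply div_le_div_of_nonneg_left (by norm_num) (by norm_num) h52
      _ ≤ 0.00012 := by norm_num
  have hexpt : Real.exp t ≤ 1.00013 := by
    calc Real.exp t ≤ (1 - t)⁻¹ := exp_le_inv_one_sub ht0 (by linarith)
      _ ≤ (1 - 0.00012)⁻¹ := by
          apply inv_anti₀ (by linarith) (by linarith)
      _ ≤ 1.00013 := by norm_num
  have hxle : (p:ℝ) ^ (-σ) ≤ 1.00013 / p := by
    rw [hx]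
    exact (div_le_div_iff_of_pos_right hp0).mpr hexpt
  have hden : (0:ℝ) < 1 - 1.00013 / (p:ℝ) := by
    have : (1.00013:ℝ)/p ≤ 1.00013/2 := by
      apply div_le_div_of_nonneg_left (by norm_num) (by norm_num) hp2
    have h12 : (1.00013:ℝ)/2 < 1 := by norm_num
    linarith
  have h1x : 0 < 1 - (p:ℝ)^(-σ) := by linarith [hxle, hden]
  apply Real.log_le_log (by positivity)
  have hmono : (1 - (p:ℝ)^(-σ))⁻¹ ≤ (1 - 1.00013/(p:ℝ))⁻¹ := by
    apply inv_anti₀ hden (by linarith)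
  have hid : (1 - 1.00013/(p:ℝ))⁻¹ = (p:ℝ)/((p:ℝ) - 1.00013) := by
    rw [show (1:ℝ) - 1.00013/(p:ℝ) = ((p:ℝ) - 1.00013)/(p:ℝ) by field_simp, inv_div]
  rw [hid] at hmono
  exact hmono

lemma tail_core {x : ℝ} (hx0 : 0 < x) (hxs : x ≤ 0.0033) :
    Real.log ((1 - x)⁻¹) ≤ x + 1.0034 * x^2 := by
  have hxlt1 : |x| < 1 := by rw [abs_of_pos hx0]; linarith
  have hlb := Real.abs_log_sub_add_sum_range_le hxlt1 1
  simp only [Finset.sum_range_succ, Finset.sum_range_zero, pow_one, zero_add] at hlb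
  rw [abs_of_pos hx0] at hlb
  norm_num at hlb
  have h1x : (0:ℝ) < 1 - x := by linarith
  rw [Real.log_inv]
  have habs := abs_le.mp hlb
  have hfrac : x^2/(1-x) ≤ 1.0034 * x^2 := by
    calc x^2/(1-x) ≤ x^2/(1-0.0033) := by
          apply div_le_div_of_nonneg_left (by positivity) (by norm_num) (by linarith)
      _ ≤ 1.0034 * x^2 := by
          rw [div_le_iff₀ (by norm_num : (0:ℝ) < 1 - 0.0033)]
          nlinarith [sq_nonneg x]
  nlinarith [habs.1, habs.2, div_nonneg (sq_nonneg x) h1x.le]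

lemma tail_point {y σ : ℝ} (hL : (26000:ℝ) ≤ Real.log y)
    (hσ : σ = 1 - 1 / (2 * Real.log y)) {p : ℕ} (hp : Nat.Prime p)
    (hp500 : 500 < p) (hpy : (p:ℝ) ≤ y) :
    Real.log ((1 - (p:ℝ) ^ (-σ))⁻¹)
      ≤ (p:ℝ)⁻¹ + (1.2974426 / (2 * Real.log y)) * (Real.log p / p)
        + 2.7275241 * (((p:ℝ))^2)⁻¹ := by
  have hp2 : (501:ℝ) ≤ (p:ℝ) := by exact_mod_cast hp500
  have hp0 : (0:ℝ) < p := by linarith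
  have hL0 : (0:ℝ) < Real.log y := by linarith
  set t := Real.log p / (2 * Real.log y) with ht
  have hxeq : (p:ℝ) ^ (-σ) = Real.exp t / p := rpow_decomp hL hσ hp
  rw [hxeq]
  have hlogp0 : 0 ≤ Real.log p := Real.log_natCast_nonneg p
  have hlogpy : Real.log p ≤ Real.log y := Real.log_le_log hp0 hpy
  have ht0 : 0 ≤ t := by positivity
  have ht12 : t ≤ 1/2 := by
    rw [ht, div_le_iff₀ (by linarith : (0:ℝ) < 2 * Real.log y)]
    linarith
  have hx0 : 0 < Real.exp t / p := by positivity
  have hexp12 : Real.exp t ≤ 1.6487213 := by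
    calc Real.exp t ≤ Real.exp (1/2 : ℝ) := Real.exp_le_exp.mpr ht12
      _ ≤ 1.6487213 := exp_half_le
  have hxsmall : Real.exp t / p ≤ 0.0033 := by
    calc Real.exp t / p ≤ 1.6487213 / p := (div_le_div_iff_of_pos_right hp0).mpr hexp12
      _ ≤ 1.6487213 / 501 := by
          apply div_le_div_of_nonneg_left (by norm_num) (by norm_num) hp2
      _ ≤ 0.0033 := by norm_num
  have hcore := tail_core hx0 hxsmall
  have hxaff : Real.exp t / p ≤ (1 + 1.2974426 * t) / p :=
    (div_le_div_iff_of_pos_right hp0).mpr (exp_affine ht0 ht12)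
  have hxsq : (Real.exp t / p)^2 ≤ 2.7182819 * (((p:ℝ))^2)⁻¹ := by
    rw [div_pow]
    have hexpsq : (Real.exp t)^2 ≤ 2.7182819 := by
      have h2t : (Real.exp t)^2 = Real.exp (t + t) := by
        rw [Real.exp_add]; ring
      rw [h2t]
      calc Real.exp (t + t) ≤ Real.exp 1 := Real.exp_le_exp.mpr (by linarith)
        _ ≤ 2.7182819 := exp_one_le
    rw [div_eq_mul_inv]
    apply mul_le_mul_of_nonneg_right hexpsq (by positivity)
  have hxterm : (1 + 1.2974426 * t) / p
      = (p:ℝ)⁻¹ + (1.2974426 / (2 * Real.log y)) * (Real.log p / p) := by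
    rw [ht]
    field_simp
  calc Real.log ((1 - Real.exp t / p)⁻¹)
      ≤ Real.exp t / p + 1.0034 * (Real.exp t / p)^2 := hcore
    _ ≤ (1 + 1.2974426 * t) / p + 1.0034 * (2.7182819 * (((p:ℝ))^2)⁻¹) := by
        nlinarith [hxsq, hxaff]
    _ ≤ (p:ℝ)⁻¹ + (1.2974426 / (2 * Real.log y)) * (Real.log p / p)
        + 2.7275241 * (((p:ℝ))^2)⁻¹ := by
        rw [hxterm]
        have hpos : (0:ℝ) ≤ (((p:ℝ))^2)⁻¹ := by positivity
        nlinarith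

end Stmt3Aux


open Stmt3Aux Finset in
/-- For `y ≥ exp(26000)` and `σ = 1 − 1/(2 log y)`,
`∏_{p ≤ y} (1 − p^{−σ})⁻¹ < 7.6515 log y`. -/
theorem stmt3 (y : ℝ) (hy : Real.exp 26000 ≤ y) (σ : ℝ)
    (hσ : σ = 1 - 1 / (2 * Real.log y)) :
    ∏ p ∈ (Finset.range (⌊y⌋₊ + 1)).filter Nat.Prime,
      (1 - (p : ℝ) ^ (-σ))⁻¹ < 7.6515 * Real.log y := by
  have hy0 : (0:ℝ) < y := lt_of_lt_of_le (Real.exp_pos 26000) hy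
  have hL : (26000:ℝ) ≤ Real.log y := by
    calc (26000:ℝ) = Real.log (Real.exp 26000) := (Real.log_exp _).symm
      _ ≤ Real.log y := Real.log_le_log (Real.exp_pos _) hy
  have hL0 : (0:ℝ) < Real.log y := by linarith
  set N := ⌊y⌋₊ with hNdef
  have hNy : (N:ℝ) ≤ y := Nat.floor_le hy0.le
  have h501 : 501 ≤ N := by
    apply Nat.le_floor
    calc ((501:ℕ):ℝ) ≤ 26000 + 1 := by norm_num
      _ ≤ Real.exp 26000 := by linarith [Real.add_one_le_exp (26000:ℝ)]
      _ ≤ y := hy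
  have hN2 : (2:ℝ) ≤ (N:ℝ) := by exact_mod_cast (by omega : 2 ≤ N)
  have hlogN_pos : 0 < Real.log (N:ℝ) := Real.log_pos (by linarith)
  have hlogN_le : Real.log (N:ℝ) ≤ Real.log y := Real.log_le_log (by linarith) hNy
  have hσ0 : 0 < σ := by
    rw [hσ]
    have h1 : 1/(2*Real.log y) ≤ 1/52000 := by
      apply one_div_le_one_div_of_le (by norm_num) (by linarith)
    linarith [one_div_pos.mpr (show (0:ℝ) < 52000 by norm_num)]
  set P := (Finset.range (N + 1)).filter Nat.Prime with hP
  -- positivity of factors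
  have hfac_pos : ∀ p ∈ P, 0 < 1 - (p:ℝ) ^ (-σ) := by
    intro p hp
    simp only [hP, Finset.mem_filter] at hp
    have hp1 : (1:ℝ) < p := by exact_mod_cast hp.2.one_lt
    have := Real.rpow_lt_one_of_one_lt_of_neg hp1 (by linarith : -σ < 0)
    linarith
  have hfac_inv_pos : ∀ p ∈ P, 0 < (1 - (p:ℝ) ^ (-σ))⁻¹ := fun p hp =>
    inv_pos.mpr (hfac_pos p hp)
  have hprod_pos : 0 < ∏ p ∈ P, (1 - (p:ℝ) ^ (-σ))⁻¹ := Finset.prod_pos hfac_inv_pos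
  -- reduce to a sum of logs
  rw [← Real.exp_log hprod_pos,
    Real.log_prod (fun p hp => (hfac_inv_pos p hp).ne'),
    show 7.6515 * Real.log y = Real.exp (Real.log 7.6515 + Real.log (Real.log y)) by
      rw [Real.exp_add, Real.exp_log (by norm_num), Real.exp_log hL0],
    Real.exp_lt_exp]
  -- split the sum at 500
  rw [← Finset.sum_filter_add_sum_filter_not P (fun p => p ≤ 500)
    (fun p => Real.log ((1 - (p:ℝ) ^ (-σ))⁻¹))]
  have hhead_set : P.filter (fun p => p ≤ 500) = (Finset.range 501).filter Nat.Prime := by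
    ext p
    simp only [hP, Finset.mem_filter, Finset.mem_range]
    constructor
    · rintro ⟨⟨_, hp⟩, h5⟩; exact ⟨by omega, hp⟩
    · rintro ⟨h5, hp⟩; exact ⟨⟨by omega, hp⟩, by omega⟩
  have htail_set : P.filter (fun p => ¬ p ≤ 500) = (Finset.Ioc 500 N).filter Nat.Prime := by
    ext p
    simp only [hP, Finset.mem_filter, Finset.mem_range, Finset.mem_Ioc]
    constructor
    · rintro ⟨⟨h1, hp⟩, h2⟩; exact ⟨⟨by omega, by omega⟩, hp⟩
    · rintro ⟨⟨h1, h2⟩, hp⟩; exact ⟨⟨by omega, hp⟩, by omega⟩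
  rw [hhead_set, htail_set]
  -- head bound
  have hhead : ∑ p ∈ (Finset.range 501).filter Nat.Prime, Real.log ((1 - (p:ℝ) ^ (-σ))⁻¹)
      ≤ 2.41689 := by
    have h1 : ∑ p ∈ (Finset.range 501).filter Nat.Prime, Real.log ((1 - (p:ℝ) ^ (-σ))⁻¹)
        ≤ ∑ p ∈ (Finset.range 501).filter Nat.Prime, Real.log ((p:ℝ)/((p:ℝ) - 1.00013)) := by
      apply Finset.sum_le_sum
      intro p hp
      simp only [Finset.mem_filter, Finset.mem_range] at hp
      exact head_point hL hσ hp.2 (by omega)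
    have hval : ∀ p ∈ (Finset.range 501).filter Nat.Prime,
        ((p:ℝ)/((p:ℝ) - 1.00013)) ≠ 0 := by
      intro p hp
      simp only [Finset.mem_filter] at hp
      have hp2 : (2:ℝ) ≤ (p:ℝ) := by exact_mod_cast hp.2.two_le
      have : (0:ℝ) < (p:ℝ)/((p:ℝ) - 1.00013) := by
        apply _root_.div_pos (by linarith) (by linarith)
      exact this.ne'
    have h2 : ∑ p ∈ (Finset.range 501).filter Nat.Prime, Real.log ((p:ℝ)/((p:ℝ) - 1.00013))
        = Real.log (∏ p ∈ (Finset.range 501).filter Nat.Prime, ((p:ℝ)/((p:ℝ) - 1.00013))) :=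
      (Real.log_prod hval).symm
    have hprodpos : 0 < ∏ p ∈ (Finset.range 501).filter Nat.Prime,
        ((p:ℝ)/((p:ℝ) - 1.00013)) := by
      apply Finset.prod_pos
      intro p hp
      simp only [Finset.mem_filter] at hp
      have hp2 : (2:ℝ) ≤ (p:ℝ) := by exact_mod_cast hp.2.two_le
      apply _root_.div_pos (by linarith) (by linarith)
    have h3 : Real.log (∏ p ∈ (Finset.range 501).filter Nat.Prime, ((p:ℝ)/((p:ℝ) - 1.00013)))
        ≤ Real.log 11.17 := by
      apply Real.log_le_log hprodpos
      rw [P500_eq]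
      exact headprod_le
    linarith [headlog_le]
  -- tail bound
  set Pt := (Finset.Ioc 500 N).filter Nat.Prime with hPt
  have htail : ∑ p ∈ Pt, Real.log ((1 - (p:ℝ) ^ (-σ))⁻¹)
      ≤ Real.log (Real.log y) - 0.548149 := by
    have hpoint : ∀ p ∈ Pt, Real.log ((1 - (p:ℝ) ^ (-σ))⁻¹)
        ≤ (p:ℝ)⁻¹ + (1.2974426 / (2 * Real.log y)) * (Real.log p / p)
          + 2.7275241 * (((p:ℝ))^2)⁻¹ := by
      intro p hp
      simp only [hPt, Finset.mem_filter, Finset.mem_Ioc] at hp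
      have hpy : (p:ℝ) ≤ y := by
        calc (p:ℝ) ≤ (N:ℝ) := by exact_mod_cast hp.1.2
          _ ≤ y := hNy
      exact tail_point hL hσ hp.2 hp.1.1 hpy
    have h1 := Finset.sum_le_sum hpoint
    rw [Finset.sum_add_distrib, Finset.sum_add_distrib] at h1
    -- T1 : sum of 1/p
    have hT1 : ∑ p ∈ Pt, ((p:ℝ))⁻¹ ≤ 1 + Real.log (Real.log y) - 0.3914 - 1.81096 := by
      have habel := abel N (by omega)
      have hup := mertens_upper N (by omega)
      have hA1 : (A N - 2*Real.log 2) * (Real.log (N:ℝ))⁻¹ ≤ 1 := by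
        have h2 : A N - 2*Real.log 2 ≤ Real.log (N:ℝ) := by linarith
        calc (A N - 2*Real.log 2) * (Real.log (N:ℝ))⁻¹
            ≤ Real.log (N:ℝ) * (Real.log (N:ℝ))⁻¹ :=
              mul_le_mul_of_nonneg_right h2 (by positivity)
          _ = 1 := mul_inv_cancel₀ hlogN_pos.ne'
      have hA2 : Real.log (Real.log (N:ℝ)) ≤ Real.log (Real.log y) :=
        Real.log_le_log hlogN_pos hlogN_le
      have hlow := mertens_lower 500 (by norm_num)
      have hlog2u : Real.log 2 < 0.6931471808 := Real.log_two_lt_d9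
      have hlog2l : (0.6931471803:ℝ) < Real.log 2 := Real.log_two_gt_d9
      have hA500 : (2.4417358:ℝ) ≤ A 500 - 2*Real.log 2 := by
        have h500 : Real.log ((500:ℕ):ℝ) = Real.log (500:ℝ) := by norm_num
        rw [h500] at hlow
        nlinarith [log500_ge]
      have hlog500pos : (0:ℝ) < Real.log 500 := Real.log_pos (by norm_num)
      have hA3 : (0.3914:ℝ) ≤ (A 500 - 2*Real.log 2) * (Real.log 500)⁻¹ := by
        have hinv : (6.2383247:ℝ)⁻¹ ≤ (Real.log 500)⁻¹ :=
          inv_anti₀ hlog500pos log500_le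
        calc (0.3914:ℝ) ≤ 2.4417358 * (6.2383247:ℝ)⁻¹ := by norm_num
          _ ≤ (A 500 - 2*Real.log 2) * (6.2383247:ℝ)⁻¹ := by
              apply mul_le_mul_of_nonneg_right hA500 (by norm_num)
          _ ≤ (A 500 - 2*Real.log 2) * (Real.log 500)⁻¹ := by
              apply mul_le_mul_of_nonneg_left hinv (by linarith)
      have hA4 : (1.81096:ℝ) ≤ Real.log (Real.log 500) := loglog500_ge
      calc ∑ p ∈ Pt, ((p:ℝ))⁻¹
          ≤ (A N - 2*Real.log 2) * (Real.log (N:ℝ))⁻¹ + Real.log (Real.log (N:ℝ))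
            - (A 500 - 2*Real.log 2) * (Real.log 500)⁻¹ - Real.log (Real.log 500) := habel
        _ ≤ 1 + Real.log (Real.log y) - 0.3914 - 1.81096 := by linarith
    -- T2 : weighted Mertens sum
    have hT2 : ∑ p ∈ Pt, (1.2974426 / (2 * Real.log y)) * (Real.log p / p) ≤ 0.6487559 := by
      rw [← Finset.mul_sum]
      have hsub : Pt ⊆ (Finset.range (N+1)).filter Nat.Prime := by
        intro p hp
        simp only [hPt, Finset.mem_filter, Finset.mem_Ioc] at hp
        simp only [Finset.mem_filter, Finset.mem_range]
        exact ⟨by omega, hp.2⟩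
      have hsum_le : ∑ p ∈ Pt, Real.log p / p ≤ A N := by
        rw [A]
        apply Finset.sum_le_sum_of_subset_of_nonneg hsub
        intro q hq _
        have : 0 ≤ Real.log q := Real.log_natCast_nonneg q
        positivity
      have hup := mertens_upper N (by omega)
      have hlog2u : Real.log 2 < 0.6931471808 := Real.log_two_lt_d9
      have hAN : A N ≤ Real.log y + 2 * Real.log 2 := by linarith
      have hsumpos : 0 ≤ ∑ p ∈ Pt, Real.log p / p := by
        apply Finset.sum_nonneg
        intro q hq
        have : 0 ≤ Real.log q := Real.log_natCast_nonneg q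
        positivity
      have hcoef : (0:ℝ) < 1.2974426 / (2 * Real.log y) := by positivity
      calc (1.2974426 / (2 * Real.log y)) * ∑ p ∈ Pt, Real.log p / p
          ≤ (1.2974426 / (2 * Real.log y)) * (Real.log y + 2 * Real.log 2) := by
            apply mul_le_mul_of_nonneg_left (hsum_le.trans hAN) hcoef.le
        _ ≤ 0.6487559 := by
            rw [div_mul_eq_mul_div, div_le_iff₀ (by linarith : (0:ℝ) < 2 * Real.log y)]
            nlinarith
    -- T3 : sum of 1/p^2
    have hT3 : ∑ p ∈ Pt, 2.7275241 * (((p:ℝ))^2)⁻¹ ≤ 0.0054551 := by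
      rw [← Finset.mul_sum]
      have hsub2 : Pt ⊆ Finset.Ioc 500 N := Finset.filter_subset _ _
      have hs1 : ∑ p ∈ Pt, (((p:ℝ))^2)⁻¹ ≤ ∑ m ∈ Finset.Ioc 500 N, (((m:ℝ))^2)⁻¹ := by
        apply Finset.sum_le_sum_of_subset_of_nonneg hsub2
        intro m hm _
        positivity
      have hs2 := sqsum N (by omega)
      have hNinv : (0:ℝ) ≤ ((N:ℝ))⁻¹ := by positivity
      calc 2.7275241 * ∑ p ∈ Pt, (((p:ℝ))^2)⁻¹
          ≤ 2.7275241 * ((500:ℝ)⁻¹) := by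
            apply mul_le_mul_of_nonneg_left (by linarith) (by norm_num)
        _ ≤ 0.0054551 := by norm_num
    calc ∑ p ∈ Pt, Real.log ((1 - (p:ℝ) ^ (-σ))⁻¹)
        ≤ (∑ p ∈ Pt, ((p:ℝ))⁻¹)
          + (∑ p ∈ Pt, (1.2974426 / (2 * Real.log y)) * (Real.log p / p))
          + (∑ p ∈ Pt, 2.7275241 * (((p:ℝ))^2)⁻¹) := h1
      _ ≤ Real.log (Real.log y) - 0.548149 := by linarith
  have hfinal := log76515_ge
  linarith
end

section
/- For any real σ ∈ (0,1), real x ≥ 1, and real y ≥ 2, the number ψ(x,y) of y-smooth integers n ≤ x satisfies ψ(x,y) ≤ x^σ · ∏_{p ≤ y} (1 − p^{−σ})^{−1}, where the product runs over primes p ≤ y. -/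
open scoped Classical

/-- `ψ(x, y)`: the number of `y`-smooth integers `1 ≤ n ≤ x`. -/
noncomputable def smoothCount (x y : ℝ) : ℕ :=
  ((Finset.range (⌊x⌋₊ + 1)).filter
    (fun n => 1 ≤ n ∧ ∀ p : ℕ, p.Prime → p ∣ n → (p : ℝ) ≤ y)).card

/-- Rankin's bound: for `0 < σ < 1`, `x ≥ 1`, `y ≥ 2`,
`ψ(x, y) ≤ x^σ ∏_{p ≤ y} (1 − p^{−σ})⁻¹`. -/
theorem stmt14 (σ : ℝ) (hσ0 : 0 < σ) (hσ1 : σ < 1) (x : ℝ) (hx : 1 ≤ x)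
    (y : ℝ) (hy : 2 ≤ y) :
    (smoothCount x y : ℝ) ≤
      x ^ σ * ∏ p ∈ (Finset.range (⌊y⌋₊ + 1)).filter Nat.Prime,
        (1 - (p : ℝ) ^ (-σ))⁻¹ := by
  classical
  set N := ⌊y⌋₊ + 1 with hN
  set S := ((Finset.range (⌊x⌋₊ + 1)).filter
    (fun n => 1 ≤ n ∧ ∀ p : ℕ, p.Prime → p ∣ n → (p : ℝ) ≤ y)) with hS
  -- the completely multiplicative function n ↦ n^{-σ}
  let f : ℕ →* ℝ :=
    { toFun := fun n => (n : ℝ) ^ (-σ)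
      map_one' := by simp
      map_mul' := by
        intro m n
        push_cast
        exact Real.mul_rpow (Nat.cast_nonneg m) (Nat.cast_nonneg n) }
  have hf : ∀ {p : ℕ}, p.Prime → ‖f p‖ < 1 := by
    intro p hp
    have h1 : (1 : ℝ) < p := by exact_mod_cast hp.one_lt
    have : (p : ℝ) ^ (-σ) < 1 := Real.rpow_lt_one_of_one_lt_of_neg h1 (by linarith)
    have h0 : (0 : ℝ) ≤ (p : ℝ) ^ (-σ) := Real.rpow_nonneg (by positivity) _
    simpa [f, Real.norm_eq_abs, abs_of_nonneg h0] using this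
  obtain ⟨-, hsum⟩ :=
    EulerProduct.summable_and_hasSum_smoothNumbers_prod_primesBelow_geometric
      (F := ℝ) (f := f) hf N
  have hprod : (Finset.range (⌊y⌋₊ + 1)).filter Nat.Prime = N.primesBelow := rfl
  -- rewrite the HasSum as an indicator sum over ℕ
  have hsum' : HasSum (Set.indicator (N.smoothNumbers) f)
      (∏ p ∈ N.primesBelow, (1 - f p)⁻¹) :=
    (hasSum_subtype_iff_indicator).mp hsum
  have hfnonneg : ∀ n : ℕ, 0 ≤ f n := fun n => Real.rpow_nonneg (Nat.cast_nonneg n) _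
  have hindnonneg : ∀ n : ℕ, 0 ≤ Set.indicator (N.smoothNumbers) f n := fun n =>
    Set.indicator_nonneg (fun m _ => hfnonneg m) n
  -- each element of S is N-smooth
  have hmem : ∀ n ∈ S, n ∈ N.smoothNumbers := by
    intro n hn
    rw [hS, Finset.mem_filter] at hn
    obtain ⟨-, h1, hsm⟩ := hn
    refine ⟨by omega, fun p hp => ?_⟩
    have hpp := Nat.prime_of_mem_primeFactorsList hp
    have hdvd := Nat.dvd_of_mem_primeFactorsList hp
    have := hsm p hpp hdvd
    have : p ≤ ⌊y⌋₊ := Nat.le_floor this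
    omega
  -- sum over S is at most the tsum
  have hsumle : ∑ n ∈ S, f n ≤ ∏ p ∈ N.primesBelow, (1 - f p)⁻¹ := by
    calc ∑ n ∈ S, f n = ∑ n ∈ S, Set.indicator (N.smoothNumbers) f n := by
          refine Finset.sum_congr rfl fun n hn => ?_
          rw [Set.indicator_of_mem (hmem n hn)]
      _ ≤ _ := sum_le_hasSum S (fun n _ => hindnonneg n) hsum'
  -- each term: 1 ≤ x^σ * f n
  have hterm : ∀ n ∈ S, (1 : ℝ) ≤ x ^ σ * f n := by
    intro n hn
    rw [hS, Finset.mem_filter] at hn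
    obtain ⟨hr, h1, -⟩ := hn
    have hn1 : (1 : ℝ) ≤ (n : ℝ) := by exact_mod_cast h1
    have hnx : (n : ℝ) ≤ x := by
      have : n ≤ ⌊x⌋₊ := by
        have := Finset.mem_range.mp hr; omega
      calc (n : ℝ) ≤ (⌊x⌋₊ : ℝ) := by exact_mod_cast this
        _ ≤ x := Nat.floor_le (by linarith)
    have hnpos : (0 : ℝ) < n := by linarith
    have hxσ : (n : ℝ) ^ σ ≤ x ^ σ := Real.rpow_le_rpow (le_of_lt hnpos) hnx hσ0.le
    have hfn : f n = ((n : ℝ) ^ σ)⁻¹ := by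
      simp [f, Real.rpow_neg (le_of_lt hnpos)]
    rw [hfn, ← div_eq_mul_inv, le_div_iff₀ (by positivity), one_mul]
    exact hxσ
  have hxσ0 : (0 : ℝ) ≤ x ^ σ := Real.rpow_nonneg (by linarith) _
  calc (smoothCount x y : ℝ) = ∑ n ∈ S, (1 : ℝ) := by
        simp [smoothCount, hS]
    _ ≤ ∑ n ∈ S, x ^ σ * f n := Finset.sum_le_sum hterm
    _ = x ^ σ * ∑ n ∈ S, f n := by rw [Finset.mul_sum]
    _ ≤ x ^ σ * ∏ p ∈ N.primesBelow, (1 - f p)⁻¹ :=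
        mul_le_mul_of_nonneg_left hsumle hxσ0
    _ = _ := by rw [hprod]; rfl
end
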